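/- Let P¹, P² be mutually orthogonal linear subspaces of ℝⁿ with P¹ ⊕ P² = ℝⁿ, let α ∈ [0,π/2], and let 1 ≤ d ≤ min{dim P¹, dim P²}. A d-dimensional linear subspace T ⊆ ℝⁿ is d-analytic between P¹ and P² with angle α if and only if there exist an orthonormal system u₁,…,u_d in P¹ and an orthonormal system v₁,…,v_d in P² such that the vectors w_i = cos α·u_i + sin α·v_i (1 ≤ i ≤ d) form an (orthonormal) basis of T. -/

import Mathlib

open Set Metric MeasureTheory Filter Pointwise
open scoped ENNReal RealInnerProductSpace NNReal

noncomputable section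

/-- `Euc n` is the Euclidean space `ℝⁿ`. -/
abbrev Euc (n : ℕ) : Type := EuclideanSpace ℝ (Fin n)

variable {n : ℕ}

/-- A cone centered at `0`. -/
def IsCone0 (C : Set (Euc n)) : Prop :=
  (0 : Euc n) ∈ C ∧ ∀ t : ℝ, 0 < t → t • C = C

/-- `f` is (the time-one map of) a Lipschitz deformation in the set `U`. -/
def IsDeformationIn (U : Set (Euc n)) (f : Euc n → Euc n) : Prop :=
  ∃ φ : ℝ → Euc n → Euc n,
    (∀ x ∈ U, φ 0 x = x) ∧
    (∀ t ∈ Icc (0:ℝ) 1, MapsTo (φ t) U U) ∧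
    ContinuousOn (fun p : ℝ × Euc n => φ p.1 p.2) (Icc (0:ℝ) 1 ×ˢ U) ∧
    (∃ L : ℝ≥0, LipschitzOnWith L (φ 1) U) ∧
    (∀ x ∈ U, φ 1 x = f x) ∧
    closure (⋃ t ∈ Icc (0:ℝ) 1,
        ({x ∈ U | φ t x ≠ x} ∪ φ t '' {x ∈ U | φ t x ≠ x})) ⊆ U ∧
    IsCompact (closure (⋃ t ∈ Icc (0:ℝ) 1,
        ({x ∈ U | φ t x ≠ x} ∪ φ t '' {x ∈ U | φ t x ≠ x})))

/-- `E` is a `d`-dimensional Almgren minimal set in the open set `U`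
(`E ⊆ U` relatively closed). -/
def IsAlmgrenMinimalIn (d : ℕ) (U E : Set (Euc n)) : Prop :=
  E ⊆ U ∧ closure E ∩ U ⊆ E ∧
  (∀ (x : Euc n) (r : ℝ), closedBall x r ⊆ U → μH[(d:ℝ)] (E ∩ closedBall x r) < ⊤) ∧
  ∀ f : Euc n → Euc n, IsDeformationIn U f →
    μH[(d:ℝ)] (E \ f '' E) ≤ μH[(d:ℝ)] (f '' E \ E)

/-- A set is reduced if it has positive `H^d` measure in every ball centered on it. -/
def IsReducedSet (d : ℕ) (E : Set (Euc n)) : Prop :=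
  ∀ x ∈ E, ∀ r : ℝ, 0 < r → 0 < μH[(d:ℝ)] (E ∩ ball x r)

/-- A (reduced) `d`-dimensional Almgren minimal cone in `ℝⁿ`. -/
def IsAlmgrenMinimalCone (d : ℕ) (C : Set (Euc n)) : Prop :=
  IsClosed C ∧ IsCone0 C ∧ IsReducedSet d C ∧ IsAlmgrenMinimalIn d univ C

/-- The class `F(E,U)` of deformations of `E` in `U`. -/
def deformClass (U E : Set (Euc n)) : Set (Set (Euc n)) :=
  {F | ∃ f, IsDeformationIn U f ∧ F = (E \ U) ∪ f '' (E ∩ U)}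

/-- Convergence in local Hausdorff distance on every compact set. -/
def LocHausTendsto (S : ℕ → Set (Euc n)) (F : Set (Euc n)) : Prop :=
  ∀ K : Set (Euc n), IsCompact K →
    Tendsto (fun k => (⨆ y ∈ S k ∩ K, infDist y F) ⊔ (⨆ y ∈ F ∩ K, infDist y (S k)))
      atTop (nhds 0)

/-- The class `F̄(E,U)` of limits of deformations of `E` in `U`. -/
def limDeformClass (d : ℕ) (U E : Set (Euc n)) : Set (Set (Euc n)) :=
  {F | F ⊆ closure U ∧ IsClosed F ∧
    (∃ S : ℕ → Set (Euc n), (∀ k, S k ∈ deformClass U E) ∧ LocHausTendsto S F) ∧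
    (∀ (x : Euc n) (r : ℝ), μH[(d:ℝ)] (F ∩ closedBall x r) < ⊤) ∧
    μH[(d:ℝ)] ((F ∩ frontier U) \ E) = 0}

/-- `C` is Almgren unique in the domain `U`. -/
def AlmgrenUniqueIn (d : ℕ) (C U : Set (Euc n)) : Prop :=
  ∀ E ∈ limDeformClass d U C,
    μH[(d:ℝ)] E = (⨅ F ∈ limDeformClass d U C, μH[(d:ℝ)] F) → E = C ∩ closure U

/-- `C` is Almgren unique (in every domain). -/
def AlmgrenUnique (d : ℕ) (C : Set (Euc n)) : Prop :=
  ∀ U : Set (Euc n), IsOpen U → IsConnected U → AlmgrenUniqueIn d C U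

/-- `F` is a `δ`-sliding deformation of `E` in `cl(U)`. -/
def IsSlidingDeformation (δ : ℝ) (U E F : Set (Euc n)) : Prop :=
  ∃ φ : ℝ → Euc n → Euc n,
    (∀ x ∈ closure U, φ 0 x = x) ∧
    (∀ t ∈ Icc (0:ℝ) 1, MapsTo (φ t) (closure U) (closure U)) ∧
    ContinuousOn (fun p : ℝ × Euc n => φ p.1 p.2) (Icc (0:ℝ) 1 ×ˢ closure U) ∧
    (∃ L : ℝ≥0, LipschitzOnWith L (φ 1) (closure U)) ∧
    (∀ t ∈ Icc (0:ℝ) 1, MapsTo (φ t) (frontier U) (frontier U)) ∧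
    (∀ t ∈ Icc (0:ℝ) 1, ∀ x ∈ E ∩ frontier U, ‖φ t x - x‖ < δ) ∧
    F = φ 1 '' E

/-- The class `F̄_δ(E, cl U)` of limits of `δ`-sliding deformations of `E`. -/
def slidingLimClass (d : ℕ) (δ : ℝ) (U E : Set (Euc n)) : Set (Set (Euc n)) :=
  {F | F ⊆ closure U ∧ IsClosed F ∧
    (∃ S : ℕ → Set (Euc n), (∀ k, IsSlidingDeformation δ U E (S k)) ∧ LocHausTendsto S F) ∧
    (∀ (x : Euc n) (r : ℝ), μH[(d:ℝ)] (F ∩ closedBall x r) < ⊤) ∧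
    μH[(d:ℝ)] ((F ∩ frontier U) \ E) = 0}

/-- `E` is `δ`-sliding minimal in `cl(U)`. -/
def IsSlidingMinimal (d : ℕ) (δ : ℝ) (U E : Set (Euc n)) : Prop :=
  ∀ F ∈ slidingLimClass d δ U E, μH[(d:ℝ)] (E \ F) ≤ μH[(d:ℝ)] (F \ E)

/-- The trace of a cone on the unit sphere. -/
def spherePart (K : Set (Euc n)) : Set (Euc n) := K ∩ sphere (0 : Euc n) 1

/-- A point of `K ∩ ∂B(0,1)` at which the net `K ∩ ∂B(0,1)` is not locally
homeomorphic to an interval (a `Y` point of the net). -/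
def IsYPoint (K : Set (Euc n)) (a : Euc n) : Prop :=
  a ∈ spherePart K ∧
  ¬ ∃ W : Set (Euc n), IsOpen W ∧ a ∈ W ∧
      Nonempty ((spherePart K ∩ W : Set (Euc n)) ≃ₜ (Set.Ioo (0:ℝ) 1))

/-- The convex domain `U(K,η)` associated to a `2`-dimensional minimal cone `K`. -/
def UDomain (K : Set (Euc n)) (η : ℝ) : Set (Euc n) :=
  {x ∈ ball (0 : Euc n) 1 |
    (∀ y ∈ spherePart K, ⟪x, y⟫ < 1 - η) ∧
    (∀ a : Euc n, IsYPoint K a → ⟪x, a⟫ < 1 - 2 * η)}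

/-- `K` is sliding stable: for some small `η` and some `δ > 0`, `K` is
`δ`-sliding minimal in `cl(U(K,η))`. -/
def SlidingStable (d : ℕ) (K : Set (Euc n)) : Prop :=
  ∃ η δ : ℝ, 0 < η ∧ η < 1 / 100 ∧ 0 < δ ∧
    IsSlidingMinimal d δ (UDomain K η) (K ∩ closure (UDomain K η))

/-- The minimal angle between two cones: the largest `θ ∈ [0,π/2]` such that
`|⟨u,v⟩| ≤ cos θ‖u‖‖v‖` for all `u ∈ A`, `v ∈ B`. -/
def minAngle (A B : Set (Euc n)) : ℝ :=
  sSup {θ : ℝ | θ ∈ Icc 0 (Real.pi / 2) ∧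
    ∀ u ∈ A, ∀ v ∈ B, |⟪u, v⟫| ≤ Real.cos θ * (‖u‖ * ‖v‖)}

/-- `|x₁ ∧ ⋯ ∧ x_d|`: the `d`-volume of the parallelepiped spanned by `x₁,…,x_d`,
i.e. the square root of the Gram determinant. -/
def wedgeNorm {d : ℕ} (x : Fin d → Euc n) : ℝ :=
  Real.sqrt (Matrix.det (Matrix.of fun i j => ⟪x i, x j⟫))

/-- The isometric inclusion `ℝ^{n₁} → ℝ^{n₁} × {0} ⊆ ℝ^{n₁+n₂}`. -/
def pad1 (n₁ n₂ : ℕ) (x : Euc n₁) : Euc (n₁ + n₂) :=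
  (EuclideanSpace.equiv (Fin (n₁ + n₂)) ℝ).symm
    (fun i => if h : (i : ℕ) < n₁ then x ⟨i, h⟩ else 0)

/-- The isometric inclusion `ℝ^{n₂} → {0} × ℝ^{n₂} ⊆ ℝ^{n₁+n₂}`. -/
def pad2 (n₁ n₂ : ℕ) (x : Euc n₂) : Euc (n₁ + n₂) :=
  (EuclideanSpace.equiv (Fin (n₁ + n₂)) ℝ).symm
    (fun i => if _ : (i : ℕ) < n₁ then 0 else x ⟨(i : ℕ) - n₁, by omega⟩)

/-- The orthogonal union `E₁ ∪⊥ E₂ = (E₁ × {0}) ∪ ({0} × E₂) ⊆ ℝ^{n₁+n₂}`. -/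
def orthUnion (n₁ n₂ : ℕ) (E₁ : Set (Euc n₁)) (E₂ : Set (Euc n₂)) : Set (Euc (n₁ + n₂)) :=
  pad1 n₁ n₂ '' E₁ ∪ pad2 n₁ n₂ '' E₂

/-- The projection `ℝ^{n₁+n₂} → ℝ^{n₁}` on the first factor. -/
def proj1 (n₁ n₂ : ℕ) (x : Euc (n₁ + n₂)) : Euc n₁ :=
  (EuclideanSpace.equiv (Fin n₁) ℝ).symm fun i => x (Fin.castAdd n₂ i)

/-- The projection `ℝ^{n₁+n₂} → ℝ^{n₂}` on the second factor. -/
def proj2 (n₁ n₂ : ℕ) (x : Euc (n₁ + n₂)) : Euc n₂ :=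
  (EuclideanSpace.equiv (Fin n₂) ℝ).symm fun i => x (Fin.natAdd n₁ i)

/-- Orthogonal projection of `ℝ^{n₁+n₂}` onto `P¹ = ℝ^{n₁} × {0}`. -/
def projTo1 (n₁ n₂ : ℕ) (x : Euc (n₁ + n₂)) : Euc (n₁ + n₂) := pad1 n₁ n₂ (proj1 n₁ n₂ x)

/-- Orthogonal projection of `ℝ^{n₁+n₂}` onto `P² = {0} × ℝ^{n₂}`. -/
def projTo2 (n₁ n₂ : ℕ) (x : Euc (n₁ + n₂)) : Euc (n₁ + n₂) := pad2 n₁ n₂ (proj2 n₁ n₂ x)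

/-- `T` is the approximate tangent `d`-plane of `F` at `x`. -/
def IsApproxTangent (d : ℕ) (F : Set (Euc n)) (x : Euc n) (T : Submodule ℝ (Euc n)) : Prop :=
  Module.finrank ℝ T = d ∧
  0 < Filter.limsup (fun r : ℝ => μH[(d:ℝ)] (F ∩ ball x r) / ENNReal.ofReal (r ^ d))
      (nhdsWithin 0 (Ioi 0)) ∧
  ∀ ε : ℝ, 0 < ε →
    Tendsto (fun r : ℝ =>
        μH[(d:ℝ)] ((F ∩ ball x r) ∩ {y | ε * ‖y - x‖ < infDist (y - x) (T : Set (Euc n))}) /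
          ENNReal.ofReal (r ^ d))
      (nhdsWithin 0 (Ioi 0)) (nhds 0)

/-- `F` is `d`-rectifiable. -/
def IsRectifiable (d : ℕ) (F : Set (Euc n)) : Prop :=
  ∃ f : ℕ → (Euc d → Euc n),
    (∀ k, ∃ L : ℝ≥0, LipschitzWith L (f k)) ∧
    μH[(d:ℝ)] (F \ ⋃ k, range (f k)) = 0

/-- Orthogonal projection onto a submodule, as a map of the ambient space. -/
def oproj (P : Submodule ℝ (Euc n)) (v : Euc n) : Euc n :=
  (Submodule.orthogonalProjection P v : Euc n)

/-- A nonzero vector `z` has angle `α` between `P¹` and `P²`. -/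
def HasAngleBetween (P₁ P₂ : Submodule ℝ (Euc n)) (α : ℝ) (z : Euc n) : Prop :=
  ‖oproj P₁ z‖ = Real.cos α * ‖z‖ ∧ ‖oproj P₂ z‖ = Real.sin α * ‖z‖

/-- `T` is a `d`-analytic subspace between `P¹` and `P²` with angle `α`. -/
def IsAnalyticSubspace (P₁ P₂ : Submodule ℝ (Euc n)) (α : ℝ) (T : Submodule ℝ (Euc n)) : Prop :=
  ∀ z ∈ T, z ≠ 0 → HasAngleBetween P₁ P₂ α z

/-- The point `(a,b) ∈ ℝ²`. -/
def mk2 (a b : ℝ) : Euc 2 := (EuclideanSpace.equiv (Fin 2) ℝ).symm ![a, b]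

/-- The sector `R_α = {(r,θ) : r₀ ≤ r ≤ 1, 0 ≤ θ ≤ π/α}` (polar coordinates). -/
def sectorR (α : ℕ) (r₀ : ℝ) : Set (Euc 2) :=
  {x | ∃ r θ : ℝ, r₀ ≤ r ∧ r ≤ 1 ∧ 0 ≤ θ ∧ θ ≤ Real.pi / α ∧
    x = mk2 (r * Real.cos θ) (r * Real.sin θ)}

/-- The inner arc `L_α = {(r₀,θ) : 0 ≤ θ ≤ π/α}`. -/
def sectorL (α : ℕ) (r₀ : ℝ) : Set (Euc 2) :=
  {x | ∃ θ : ℝ, 0 ≤ θ ∧ θ ≤ Real.pi / α ∧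
    x = mk2 (r₀ * Real.cos θ) (r₀ * Real.sin θ)}

/-- The outer arc `K_α = {(1,θ) : 0 ≤ θ ≤ π/α}`. -/
def sectorK (α : ℕ) : Set (Euc 2) :=
  {x | ∃ θ : ℝ, 0 ≤ θ ∧ θ ≤ Real.pi / α ∧ x = mk2 (Real.cos θ) (Real.sin θ)}

/-- The annular sector `{(r,θ) : s/4 ≤ r ≤ 2s, 0 ≤ θ ≤ θ₀}`. -/
def annR (θ₀ s : ℝ) : Set (Euc 2) :=
  {x | ∃ r θ : ℝ, s / 4 ≤ r ∧ r ≤ 2 * s ∧ 0 ≤ θ ∧ θ ≤ θ₀ ∧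
    x = mk2 (r * Real.cos θ) (r * Real.sin θ)}

/-- The annular sector `{(r,θ) : s/4 ≤ r ≤ s, 0 ≤ θ ≤ θ₀}`. -/
def annR' (θ₀ s : ℝ) : Set (Euc 2) :=
  {x | ∃ r θ : ℝ, s / 4 ≤ r ∧ r ≤ s ∧ 0 ≤ θ ∧ θ ≤ θ₀ ∧
    x = mk2 (r * Real.cos θ) (r * Real.sin θ)}


lemma oproj_mem {n : ℕ} (P : Submodule ℝ (Euc n)) (v : Euc n) : oproj P v ∈ P :=
  (Submodule.orthogonalProjection P v).2

lemma oproj_add {n : ℕ} (P : Submodule ℝ (Euc n)) (x y : Euc n) :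
    oproj P (x + y) = oproj P x + oproj P y := by
  simp [oproj]

lemma oproj_of_mem {n : ℕ} {P : Submodule ℝ (Euc n)} {v : Euc n} (h : v ∈ P) :
    oproj P v = v := Submodule.starProjection_eq_self_iff.2 h

lemma oproj_of_mem_orth {n : ℕ} {P : Submodule ℝ (Euc n)} {v : Euc n} (h : v ∈ Pᗮ) :
    oproj P v = 0 := by
  simp [oproj, Submodule.orthogonalProjectionOnto_apply_of_mem_orthogonal h]

lemma mem_of_norm_oproj_eq {n : ℕ} {P : Submodule ℝ (Euc n)} {z : Euc n}
    (h : ‖oproj P z‖ = ‖z‖) : z ∈ P := by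
  have hpz : ⟪z - oproj P z, oproj P z⟫ = 0 :=
    Submodule.starProjection_inner_eq_zero z _ (oproj_mem P z)
  have hexp := norm_add_sq_real (z - oproj P z) (oproj P z)
  rw [sub_add_cancel, hpz] at hexp
  have h0 : ‖z - oproj P z‖ ^ 2 = 0 := by rw [h] at hexp; nlinarith
  have : z - oproj P z = 0 := by
    simpa using (pow_eq_zero_iff (two_ne_zero)).1 h0
  exact Submodule.starProjection_eq_self_iff.1 (sub_eq_zero.1 this).symm

/-- Main helper for the forward direction: if the norm of the projection of every
nonzero element of `T` is `c` times its norm, then the projections of an orthonormal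
family in `T` have inner products `c² δᵢⱼ`. -/
lemma key_inner {n d : ℕ} {P : Submodule ℝ (Euc n)} {T : Submodule ℝ (Euc n)} {c : ℝ}
    (hc : 0 ≤ c) (hproj : ∀ z ∈ T, z ≠ 0 → ‖oproj P z‖ = c * ‖z‖)
    {w : Fin d → Euc n} (hw : Orthonormal ℝ w) (hwT : ∀ i, w i ∈ T) (i j : Fin d) :
    ⟪oproj P (w i), oproj P (w j)⟫ = if i = j then c ^ 2 else 0 := by
  have hn1 : ∀ i, ‖w i‖ = 1 := hw.1
  have hnp : ∀ i, ‖oproj P (w i)‖ = c := fun i => by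
    rw [hproj (w i) (hwT i) (hw.ne_zero i), hn1 i, mul_one]
  by_cases hij : i = j
  · subst hij
    rw [if_pos rfl, real_inner_self_eq_norm_sq, hnp]
  · simp only [hij, if_false]
    have hsum : ‖w i + w j‖ ^ 2 = 2 := by
      rw [norm_add_sq_real, hw.2 hij, hn1 i, hn1 j]; ring
    have hne : w i + w j ≠ 0 := by
      intro h
      rw [h, norm_zero] at hsum; norm_num at hsum
    have hps : ‖oproj P (w i + w j)‖ ^ 2 = c ^ 2 * 2 := by
      rw [hproj _ (T.add_mem (hwT i) (hwT j)) hne, mul_pow, hsum]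
    rw [oproj_add, norm_add_sq_real, hnp i, hnp j] at hps
    linarith


set_option maxHeartbeats 1000000 in
/-- **Characterization of analytic `d`-subspaces.** Let `P¹ ⊥ P²` with `P¹ ⊕ P² = ℝⁿ`,
`α ∈ [0,π/2]`, and `1 ≤ d ≤ min{dim P¹, dim P²}`. A `d`-dimensional subspace `T` is
`d`-analytic between `P¹` and `P²` with angle `α` iff there are orthonormal systems
`u₁,…,u_d` in `P¹` and `v₁,…,v_d` in `P²` such that the vectors
`w_i = cos α·u_i + sin α·v_i` form an orthonormal basis of `T`. -/
theorem analytic_subspace_iff_orthonormal_systems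
    (n d : ℕ) (P₁ P₂ : Submodule ℝ (Euc n))
    (horth : P₁ ≤ P₂ᗮ) (hcompl : P₁ ⊔ P₂ = ⊤)
    (α : ℝ) (hα : α ∈ Icc 0 (Real.pi / 2))
    (hd₁ : 1 ≤ d) (hd : d ≤ min (Module.finrank ℝ P₁) (Module.finrank ℝ P₂))
    (T : Submodule ℝ (Euc n)) (hT : Module.finrank ℝ T = d) :
    IsAnalyticSubspace P₁ P₂ α T ↔
      ∃ u v : Fin d → Euc n,
        Orthonormal ℝ u ∧ (∀ i, u i ∈ P₁) ∧
        Orthonormal ℝ v ∧ (∀ i, v i ∈ P₂) ∧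
        Orthonormal ℝ (fun i => Real.cos α • u i + Real.sin α • v i) ∧
        Submodule.span ℝ (range fun i => Real.cos α • u i + Real.sin α • v i) = T := by
  have hpi := Real.pi_pos
  have hc0 : 0 ≤ Real.cos α := Real.cos_nonneg_of_mem_Icc ⟨by linarith [hα.1], hα.2⟩
  have hs0 : 0 ≤ Real.sin α := Real.sin_nonneg_of_nonneg_of_le_pi hα.1 (by linarith [hα.2])
  have hcs : Real.cos α ^ 2 + Real.sin α ^ 2 = 1 := by
    rw [add_comm]; exact Real.sin_sq_add_cos_sq α
  -- P₂ = P₁ᗮ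
  have h21 : P₂ ≤ P₁ᗮ := by
    intro x hx
    rw [Submodule.mem_orthogonal]
    intro y hy
    rw [real_inner_comm]
    exact (horth hy) x hx
  have hdisj : P₁ ⊓ P₂ = ⊥ := by
    rw [Submodule.eq_bot_iff]
    intro x hx
    have h0 : ⟪x, x⟫ = 0 := (horth hx.1) x hx.2
    exact inner_self_eq_zero.1 h0
  have hn : Module.finrank ℝ (Euc n) = n := finrank_euclideanSpace_fin
  have hsumrank : Module.finrank ℝ P₁ + Module.finrank ℝ P₂ = n := by
    have := Submodule.finrank_sup_add_finrank_inf_eq P₁ P₂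
    rw [hcompl, hdisj] at this
    simpa [hn] using this.symm
  have horthrank := Submodule.finrank_add_finrank_orthogonal (K := P₁)
  rw [hn] at horthrank
  have hP2 : P₂ = P₁ᗮ := Submodule.eq_of_le_of_finrank_eq h21 (by omega)
  have hproj12 : ∀ z : Euc n, oproj P₁ z + oproj P₂ z = z := by
    intro z
    rw [hP2]
    exact Submodule.starProjection_add_starProjection_orthogonal (K := P₁) z
  constructor
  · -- forward direction
    intro hA
    -- orthonormal basis of T
    set b0 := (stdOrthonormalBasis ℝ T).reindex (finCongr hT) with hb0
    set w : Fin d → Euc n := fun i => (b0 i : Euc n) with hwdef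
    have hw : Orthonormal ℝ w := by
      rw [orthonormal_iff_ite]
      intro i j
      have := orthonormal_iff_ite.1 b0.orthonormal i j
      rwa [Submodule.coe_inner] at this
    have hwT : ∀ i, w i ∈ T := fun i => (b0 i).2
    have hspanw : Submodule.span ℝ (range w) = T := by
      have : range w = T.subtype '' range b0 := by
        rw [← range_comp]; rfl
      rw [this, ← Submodule.map_span, ← b0.coe_toBasis, b0.toBasis.span_eq,
        Submodule.map_top, Submodule.range_subtype]
    by_cases hcz : Real.cos α = 0
    · -- α = π/2 : T ⊆ P₂
      have hs1 : Real.sin α = 1 := by nlinarith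
      have hTP2 : ∀ i, w i ∈ P₂ := by
        intro i
        refine mem_of_norm_oproj_eq ?_
        rw [(hA (w i) (hwT i) (hw.ne_zero i)).2, hs1, one_mul]
      have hd1 : d ≤ Module.finrank ℝ P₁ := le_trans hd (min_le_left _ _)
      set b1 := stdOrthonormalBasis ℝ P₁ with hb1
      set u : Fin d → Euc n := fun i => (b1 (Fin.castLE hd1 i) : Euc n) with hudef
      have hu : Orthonormal ℝ u := by
        rw [orthonormal_iff_ite]
        intro i j
        have := orthonormal_iff_ite.1 (b1.orthonormal.comp (Fin.castLE hd1)
          (Fin.castLE_injective hd1)) i j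
        rwa [Submodule.coe_inner] at this
      have heq : (fun i => Real.cos α • u i + Real.sin α • w i) = w := by
        funext i; simp [hcz, hs1]
      exact ⟨u, w, hu, fun i => (b1 (Fin.castLE hd1 i)).2, hw, hTP2,
        by rw [heq]; exact hw, by rw [heq]; exact hspanw⟩
    · by_cases hsz : Real.sin α = 0
      · -- α = 0 : T ⊆ P₁
        have hc1 : Real.cos α = 1 := by nlinarith
        have hTP1 : ∀ i, w i ∈ P₁ := by
          intro i
          refine mem_of_norm_oproj_eq ?_
          rw [(hA (w i) (hwT i) (hw.ne_zero i)).1, hc1, one_mul]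
        have hd2 : d ≤ Module.finrank ℝ P₂ := le_trans hd (min_le_right _ _)
        set b2 := stdOrthonormalBasis ℝ P₂ with hb2
        set v : Fin d → Euc n := fun i => (b2 (Fin.castLE hd2 i) : Euc n) with hvdef
        have hv : Orthonormal ℝ v := by
          rw [orthonormal_iff_ite]
          intro i j
          have := orthonormal_iff_ite.1 (b2.orthonormal.comp (Fin.castLE hd2)
            (Fin.castLE_injective hd2)) i j
          rwa [Submodule.coe_inner] at this
        have heq : (fun i => Real.cos α • w i + Real.sin α • v i) = w := by
          funext i; simp [hc1, hsz]
        exact ⟨w, v, hw, hTP1, hv, fun i => (b2 (Fin.castLE hd2 i)).2,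
          by rw [heq]; exact hw, by rw [heq]; exact hspanw⟩
      · -- general case
        have hcpos : 0 < Real.cos α := lt_of_le_of_ne hc0 (Ne.symm hcz)
        have hspos : 0 < Real.sin α := lt_of_le_of_ne hs0 (Ne.symm hsz)
        have hkey1 := key_inner hc0 (fun z hz hz0 => (hA z hz hz0).1) hw hwT
        have hkey2 := key_inner hs0 (fun z hz hz0 => (hA z hz hz0).2) hw hwT
        set u : Fin d → Euc n := fun i => (Real.cos α)⁻¹ • oproj P₁ (w i) with hudef
        set v : Fin d → Euc n := fun i => (Real.sin α)⁻¹ • oproj P₂ (w i) with hvdef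
        have hu : Orthonormal ℝ u := by
          rw [orthonormal_iff_ite]
          intro i j
          rw [hudef]
          simp only [real_inner_smul_left, real_inner_smul_right, hkey1 i j]
          by_cases hij : i = j <;> simp [hij] <;> field_simp <;> ring
        have hv : Orthonormal ℝ v := by
          rw [orthonormal_iff_ite]
          intro i j
          rw [hvdef]
          simp only [real_inner_smul_left, real_inner_smul_right, hkey2 i j]
          by_cases hij : i = j <;> simp [hij] <;> field_simp <;> ring
        have heq : (fun i => Real.cos α • u i + Real.sin α • v i) = w := by
          funext i
          rw [hudef, hvdef]
          simp only [smul_smul, mul_inv_cancel₀ hcz, mul_inv_cancel₀ hsz, one_smul]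
          exact hproj12 (w i)
        exact ⟨u, v, hu,
          fun i => P₁.smul_mem _ (oproj_mem P₁ (w i)),
          hv, fun i => P₂.smul_mem _ (oproj_mem P₂ (w i)),
          by rw [heq]; exact hw, by rw [heq]; exact hspanw⟩
  · -- reverse direction
    rintro ⟨u, v, hu, huP, hv, hvP, hw, hspan⟩
    intro z hzT hz0
    rw [← hspan] at hzT
    obtain ⟨cf, hcf⟩ := (Submodule.mem_span_range_iff_exists_fun ℝ).1 hzT
    have hnormz : ‖z‖ ^ 2 = ∑ i, cf i ^ 2 := by
      rw [← real_inner_self_eq_norm_sq, ← hcf, hw.inner_sum cf cf Finset.univ]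
      exact Finset.sum_congr rfl fun i _ => by simp [pow_two]
    -- projections
    have hop : ∀ (P : Submodule ℝ (Euc n)) (x : Fin d → Euc n) (y : Fin d → Euc n)
        (hx : ∀ i, oproj P (x i) = x i) (hy : ∀ i, oproj P (y i) = 0) (a b : ℝ),
        oproj P (∑ i, cf i • (a • x i + b • y i)) = a • ∑ i, cf i • x i := by
      intro P x y hx hy a b
      have hlin : ∀ s : Euc n, oproj P s =
          (P.subtype.comp (Submodule.orthogonalProjection P).toLinearMap) s := fun s => rfl
      rw [hlin, map_sum]
      rw [Finset.smul_sum]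
      refine Finset.sum_congr rfl fun i _ => ?_
      rw [_root_.map_smul, map_add, _root_.map_smul, _root_.map_smul]
      have hx' := hx i
      have hy' := hy i
      rw [hlin] at hx' hy'
      rw [hx', hy', smul_zero, add_zero, smul_comm]
    have hvP1 : ∀ i, v i ∈ P₁ᗮ := fun i => h21 (hvP i)
    have huP2 : ∀ i, u i ∈ P₂ᗮ := fun i => horth (huP i)
    have h1 : oproj P₁ z = Real.cos α • ∑ i, cf i • u i := by
      rw [← hcf]
      exact hop P₁ u v (fun i => oproj_of_mem (huP i)) (fun i => oproj_of_mem_orth (hvP1 i))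
        (Real.cos α) (Real.sin α)
    have h2 : oproj P₂ z = Real.sin α • ∑ i, cf i • v i := by
      rw [← hcf]
      have : ∀ i, cf i • (Real.cos α • u i + Real.sin α • v i)
          = cf i • (Real.sin α • v i + Real.cos α • u i) := fun i => by rw [add_comm]
      rw [Finset.sum_congr rfl fun i _ => this i]
      exact hop P₂ v u (fun i => oproj_of_mem (hvP i)) (fun i => oproj_of_mem_orth (huP2 i))
        (Real.sin α) (Real.cos α)
    have hnormu : ‖∑ i, cf i • u i‖ = ‖z‖ := by
      have ha : ‖∑ i, cf i • u i‖ ^ 2 = ‖z‖ ^ 2 := by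
        rw [← real_inner_self_eq_norm_sq, hnormz]
        simpa [pow_two] using hu.inner_sum cf cf Finset.univ
      nlinarith [norm_nonneg (∑ i, cf i • u i), norm_nonneg z]
    have hnormv : ‖∑ i, cf i • v i‖ = ‖z‖ := by
      have ha : ‖∑ i, cf i • v i‖ ^ 2 = ‖z‖ ^ 2 := by
        rw [← real_inner_self_eq_norm_sq, hnormz]
        simpa [pow_two] using hv.inner_sum cf cf Finset.univ
      nlinarith [norm_nonneg (∑ i, cf i • v i), norm_nonneg z]
    constructor
    · rw [h1, norm_smul, Real.norm_eq_abs, abs_of_nonneg hc0, hnormu]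
    · rw [h2, norm_smul, Real.norm_eq_abs, abs_of_nonneg hs0, hnormv]

end
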